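/- Let δ > 0, let P = Pᵀ ∈ ℝ^{n×n} be positive definite, Y ∈ ℝ^{n×T}, ε₁ > 0, ε₂ ∈ ℝ, and let U_{0,T} ∈ ℝ^{1×T}, X_{1,T} ∈ ℝ^{n×T}, V_{0,T} ∈ ℝ^{n×T}. Set Q := P⁻¹, G_K := Yᵀ P⁻¹, τ := 1/ε₁, 𝒜_c := X_{1,T} G_K, ℋ := −V_{0,T} G_K, 𝒦 := U_{0,T} G_K. Then the 5×5 block matrix [[−Q, 0, 𝒦ᵀ, 𝒜_cᵀ, δℋᵀ], [0, −τQ, 0, 0, δI], [𝒦, 0, −(1/τ)I, 0, 0], [𝒜_c, 0, 0, −Q⁻¹ + ε₂I, 0], [δℋ, δI, 0, 0, −ε₂I]] is negative definite if and only if the data-based 5×5 block matrix [[−P, 0, Y U_{0,T}ᵀ, Y X_{1,T}ᵀ, −δ Y V_{0,T}ᵀ], [0, −ε₁P, 0, 0, δε₁P], [U_{0,T} Yᵀ, 0, −ε₁I, 0, 0], [X_{1,T} Yᵀ, 0, 0, −P + ε₂I, 0], [−δ V_{0,T} Yᵀ, δε₁P, 0, 0, −ε₂I]] is negative definite. -/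

import Mathlib

open Matrix

/-- The model-form 5×5 block matrix, with blocks of sizes `[n, n, 1, n, n]`,
`[[−Q, 0, 𝒦ᵀ, 𝒜cᵀ, δℋᵀ], [0, −τQ, 0, 0, δI], [𝒦, 0, −(1/τ)I, 0, 0],
[𝒜c, 0, 0, −Q⁻¹ + ε₂I, 0], [δℋ, δI, 0, 0, −ε₂I]]`. -/
noncomputable def blockMat5 {n : ℕ}
    (Q Ac H : Matrix (Fin n) (Fin n) ℝ) (K : Matrix (Fin 1) (Fin n) ℝ)
    (τ δ ε₂ : ℝ) :
    Matrix (((Fin n ⊕ Fin n) ⊕ (Fin 1 ⊕ Fin n)) ⊕ Fin n)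
      (((Fin n ⊕ Fin n) ⊕ (Fin 1 ⊕ Fin n)) ⊕ Fin n) ℝ :=
  Matrix.fromBlocks
    (Matrix.fromBlocks
      (Matrix.fromBlocks (-Q) 0 0 (-(τ • Q)))
      (Matrix.fromBlocks Kᵀ Acᵀ 0 0)
      (Matrix.fromBlocks K 0 Ac 0)
      (Matrix.fromBlocks (-((1 / τ) • (1 : Matrix (Fin 1) (Fin 1) ℝ))) 0 0
        (-Q⁻¹ + ε₂ • (1 : Matrix (Fin n) (Fin n) ℝ))))
    (Matrix.fromRows
      (Matrix.fromRows (δ • Hᵀ) (δ • (1 : Matrix (Fin n) (Fin n) ℝ)))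
      (Matrix.fromRows (0 : Matrix (Fin 1) (Fin n) ℝ) (0 : Matrix (Fin n) (Fin n) ℝ)))
    (Matrix.fromCols
      (Matrix.fromCols (δ • H) (δ • (1 : Matrix (Fin n) (Fin n) ℝ)))
      (Matrix.fromCols (0 : Matrix (Fin n) (Fin 1) ℝ) (0 : Matrix (Fin n) (Fin n) ℝ)))
    (-(ε₂ • (1 : Matrix (Fin n) (Fin n) ℝ)))

/-- The data-based 5×5 block matrix, with blocks of sizes `[n, n, 1, n, n]`,
`[[−P, 0, Y U₀ᵀ, Y X₁ᵀ, −δ Y V₀ᵀ], [0, −ε₁P, 0, 0, δε₁P], [U₀ Yᵀ, 0, −ε₁I, 0, 0],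
[X₁ Yᵀ, 0, 0, −P + ε₂I, 0], [−δ V₀ Yᵀ, δε₁P, 0, 0, −ε₂I]]`. -/
def dataBlockMat5 {n T : ℕ}
    (P : Matrix (Fin n) (Fin n) ℝ) (Y : Matrix (Fin n) (Fin T) ℝ)
    (U₀ : Matrix (Fin 1) (Fin T) ℝ) (X₁ V₀ : Matrix (Fin n) (Fin T) ℝ)
    (δ ε₁ ε₂ : ℝ) :
    Matrix (((Fin n ⊕ Fin n) ⊕ (Fin 1 ⊕ Fin n)) ⊕ Fin n)
      (((Fin n ⊕ Fin n) ⊕ (Fin 1 ⊕ Fin n)) ⊕ Fin n) ℝ :=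
  Matrix.fromBlocks
    (Matrix.fromBlocks
      (Matrix.fromBlocks (-P) 0 0 (-(ε₁ • P)))
      (Matrix.fromBlocks (Y * U₀ᵀ) (Y * X₁ᵀ) 0 0)
      (Matrix.fromBlocks (U₀ * Yᵀ) 0 (X₁ * Yᵀ) 0)
      (Matrix.fromBlocks (-(ε₁ • (1 : Matrix (Fin 1) (Fin 1) ℝ))) 0 0
        (-P + ε₂ • (1 : Matrix (Fin n) (Fin n) ℝ))))
    (Matrix.fromRows
      (Matrix.fromRows (-(δ • (Y * V₀ᵀ))) ((δ * ε₁) • P))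
      (Matrix.fromRows (0 : Matrix (Fin 1) (Fin n) ℝ) (0 : Matrix (Fin n) (Fin n) ℝ)))
    (Matrix.fromCols
      (Matrix.fromCols (-(δ • (V₀ * Yᵀ))) ((δ * ε₁) • P))
      (Matrix.fromCols (0 : Matrix (Fin n) (Fin 1) ℝ) (0 : Matrix (Fin n) (Fin n) ℝ)))
    (-(ε₂ • (1 : Matrix (Fin n) (Fin n) ℝ)))


lemma posdef_congruence_aux {m : Type*} [Fintype m] [DecidableEq m]
    (C M : Matrix m m ℝ) (hCM : IsUnit C.det) (hM : M.PosDef) :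
    (Cᵀ * M * C).PosDef := by
  refine posDef_iff_dotProduct_mulVec.mpr ⟨?_, fun x hx => ?_⟩
  · have := isHermitian_conjTranspose_mul_mul C hM.isHermitian
    rwa [conjTranspose_eq_transpose_of_trivial] at this
  · have hCx : C *ᵥ x ≠ 0 := by
      intro h
      apply hx
      have h2 := congrArg (C⁻¹ *ᵥ ·) h
      simpa [mulVec_mulVec, nonsing_inv_mul C hCM] using h2
    have h3 := (posDef_iff_dotProduct_mulVec.mp hM).2 hCx
    simp only [star_trivial] at h3 ⊢
    rwa [Matrix.mul_assoc, ← mulVec_mulVec, dotProduct_mulVec, vecMul_transpose,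
      ← mulVec_mulVec]

lemma posdef_congruence {m : Type*} [Fintype m] [DecidableEq m]
    (C M : Matrix m m ℝ) (hCM : IsUnit C.det) :
    (Cᵀ * M * C).PosDef ↔ M.PosDef := by
  refine ⟨fun h => ?_, posdef_congruence_aux C M hCM⟩
  have hCinv : IsUnit C⁻¹.det := isUnit_nonsing_inv_det _ hCM
  have := posdef_congruence_aux C⁻¹ (Cᵀ * M * C) hCinv h
  have hE : C⁻¹ᵀ * (Cᵀ * M * C) * C⁻¹ = M := by
    rw [transpose_nonsing_inv]
    calc Cᵀ⁻¹ * (Cᵀ * M * C) * C⁻¹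
        = (Cᵀ⁻¹ * Cᵀ) * M * (C * C⁻¹) := by noncomm_ring
      _ = M := by rw [nonsing_inv_mul _ (by simpa using hCM), mul_nonsing_inv _ hCM]; simp
  rwa [hE] at this

/-- Congruence step in the proof of Proposition 1: the model-form 5×5 block
matrix is negative definite iff the data-based 5×5 block matrix is. -/
theorem model_data_block_equivalence {n T : ℕ} (hn : 0 < n) (hT : 0 < T)
    (δ : ℝ) (hδ : 0 < δ)
    (P : Matrix (Fin n) (Fin n) ℝ) (hPsym : P = Pᵀ) (hPpd : P.PosDef)
    (Y : Matrix (Fin n) (Fin T) ℝ)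
    (ε₁ : ℝ) (hε₁ : 0 < ε₁) (ε₂ : ℝ)
    (U₀ : Matrix (Fin 1) (Fin T) ℝ) (X₁ V₀ : Matrix (Fin n) (Fin T) ℝ)
    (Q : Matrix (Fin n) (Fin n) ℝ) (hQ : Q = P⁻¹)
    (G_K : Matrix (Fin T) (Fin n) ℝ) (hGK : G_K = Yᵀ * P⁻¹)
    (τ : ℝ) (hτ : τ = 1 / ε₁)
    (Ac : Matrix (Fin n) (Fin n) ℝ) (hAc : Ac = X₁ * G_K)
    (H : Matrix (Fin n) (Fin n) ℝ) (hH : H = -(V₀ * G_K))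
    (K : Matrix (Fin 1) (Fin n) ℝ) (hK : K = U₀ * G_K) :
    (-(blockMat5 Q Ac H K τ δ ε₂)).PosDef ↔
      (-(dataBlockMat5 P Y U₀ X₁ V₀ δ ε₁ ε₂)).PosDef := by
  subst hQ hGK hτ hAc hH hK
  have hPdet : IsUnit P.det := hPpd.det_pos.ne'.isUnit
  have hPP : P * P⁻¹ = 1 := mul_nonsing_inv P hPdet
  have hPP' : P⁻¹ * P = 1 := nonsing_inv_mul P hPdet
  have hPit : P⁻¹ᵀ = P⁻¹ := by rw [transpose_nonsing_inv, ← hPsym]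
  set C₁ : Matrix ((Fin n ⊕ Fin n) ⊕ (Fin 1 ⊕ Fin n)) ((Fin n ⊕ Fin n) ⊕ (Fin 1 ⊕ Fin n)) ℝ :=
    fromBlocks (fromBlocks P 0 0 (ε₁ • P)) 0 0 (fromBlocks 1 0 0 1) with hC₁
  set C : Matrix (((Fin n ⊕ Fin n) ⊕ (Fin 1 ⊕ Fin n)) ⊕ Fin n)
      (((Fin n ⊕ Fin n) ⊕ (Fin 1 ⊕ Fin n)) ⊕ Fin n) ℝ := fromBlocks C₁ 0 0 1 with hC
  have hCdet : IsUnit C.det := by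
    simp only [hC, hC₁, det_fromBlocks_zero₂₁, det_one, det_smul, mul_one, one_mul]
    exact hPdet.mul ((hε₁.ne'.isUnit.pow _).mul hPdet)
  have hCt : Cᵀ = C := by
    simp [hC, hC₁, fromBlocks_transpose, ← hPsym, transpose_smul]
  have key : -(dataBlockMat5 P Y U₀ X₁ V₀ δ ε₁ ε₂)
      = Cᵀ * (-(blockMat5 P⁻¹ (X₁ * (Yᵀ * P⁻¹)) (-(V₀ * (Yᵀ * P⁻¹))) (U₀ * (Yᵀ * P⁻¹))
          (1 / ε₁) δ ε₂)) * C := by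
    have hdata : dataBlockMat5 P Y U₀ X₁ V₀ δ ε₁ ε₂
        = Cᵀ * blockMat5 P⁻¹ (X₁ * (Yᵀ * P⁻¹)) (-(V₀ * (Yᵀ * P⁻¹))) (U₀ * (Yᵀ * P⁻¹))
            (1 / ε₁) δ ε₂ * C := by
      have h1 : 1 / ε₁ * ε₁ = 1 := by field_simp
      have hPPl : ∀ {k : ℕ} (X : Matrix (Fin n) (Fin k) ℝ), P * (P⁻¹ * X) = X := by
        intro k X; rw [← Matrix.mul_assoc, hPP, Matrix.one_mul]
      have hPinv2 : P⁻¹⁻¹ = P := nonsing_inv_nonsing_inv P hPdet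
      rw [hCt]
      simp only [hC, hC₁, blockMat5, dataBlockMat5, fromBlocks_multiply,
        fromBlocks_mul_fromRows, fromCols_mul_fromBlocks, fromRows_mul, mul_fromCols,
        Matrix.mul_one, Matrix.one_mul, Matrix.mul_zero, Matrix.zero_mul,
        add_zero, zero_add, Matrix.neg_mul, Matrix.mul_neg, transpose_mul, hPit,
        Matrix.mul_smul, Matrix.smul_mul, smul_smul, Matrix.mul_assoc, hPP', hPP,
        transpose_transpose, transpose_neg, hPPl, hPinv2, h1, one_smul, smul_zero,
        neg_zero, smul_neg, neg_smul, one_div_one_div, mul_comm ε₁ δ]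
    rw [hdata]
    simp [Matrix.mul_neg, Matrix.neg_mul]
  rw [key]
  exact (posdef_congruence C _ hCdet).symm
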